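/- arXiv:2602.20635 — 2 statements merged into one kernel-verified Lean document; each statement's English description precedes it below -/
import Mathlib

section
/- For any s, t ∈ ℕ and any set X of density matrices on n qudits, D^s(I^t(X)) ⊆ I^t(D^s(X)); i.e., applying t insertions followed by s deletions always yields a state reachable by s deletions followed by t insertions. -/
open Matrix
open scoped ComplexOrder

/-- Matrices on `n` qudits of level `l`. -/
abbrev QMat (l n : ℕ) := Matrix (Fin n → Fin l) (Fin n → Fin l) ℂ

/-- A quantum state on some finite number of qudits. -/
def QState (l : ℕ) := Σ n : ℕ, QMat l n

/-- Density matrix: positive semidefinite with trace 1. -/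
def IsDensity {l n : ℕ} (ρ : QMat l n) : Prop := ρ.PosSemidef ∧ ρ.trace = 1

def IsDensityS {l : ℕ} (ρ : QState l) : Prop := ρ.2.PosSemidef ∧ ρ.2.trace = 1

/-- Partial trace over the qudit at position `p`. -/
noncomputable def traceOut {l n : ℕ} (p : Fin (n + 1)) (ρ : QMat l (n + 1)) : QMat l n :=
  fun x y => ∑ z : Fin l, ρ (p.insertNth z x) (p.insertNth z y)

/-- Single deletion: all states obtained by tracing out one qudit. -/
def del1 {l : ℕ} : QState l → Set (QState l)
  | ⟨0, _⟩ => ∅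
  | ⟨n + 1, ρ⟩ => { σ | ∃ p : Fin (n + 1), σ = ⟨n, traceOut p ρ⟩ }

/-- Single insertion sphere: density matrices having `ρ` among their single deletions. -/
def ins1 {l : ℕ} (ρ : QState l) : Set (QState l) :=
  { σ | IsDensityS σ ∧ ρ ∈ del1 σ }

def delSet {l : ℕ} (X : Set (QState l)) : Set (QState l) := ⋃ ρ ∈ X, del1 ρ
def insSet {l : ℕ} (X : Set (QState l)) : Set (QState l) := ⋃ ρ ∈ X, ins1 ρ

/-- `s`-deletion errors. -/
def Dq {l : ℕ} : ℕ → Set (QState l) → Set (QState l)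
  | 0, X => X
  | s + 1, X => delSet (Dq s X)

/-- `t`-insertion errors. -/
def Iq {l : ℕ} : ℕ → Set (QState l) → Set (QState l)
  | 0, X => X
  | t + 1, X => insSet (Iq t X)

/-- Quantum indel distance. -/
noncomputable def qdist {l : ℕ} (ρ₁ ρ₂ : QState l) : ℕ :=
  sInf { k | ∃ s t : ℕ, s + t = k ∧ (Dq s {ρ₁} ∩ Dq t {ρ₂}).Nonempty }

/-! ### Auxiliary lemmas -/

lemma sum_insertNth {l n : ℕ} {M : Type*} [AddCommMonoid M] (p : Fin (n + 1))
    (f : (Fin (n + 1) → Fin l) → M) :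
    ∑ u, f u = ∑ z : Fin l, ∑ x : Fin n → Fin l, f (p.insertNth z x) := by
  rw [← (Fin.insertNthEquiv (fun _ => Fin l) p).sum_comp f]
  exact Fintype.sum_prod_type _

lemma trace_traceOut {l n : ℕ} (p : Fin (n + 1)) (ρ : QMat l (n + 1)) :
    (traceOut p ρ).trace = ρ.trace := by
  simp only [Matrix.trace, Matrix.diag, traceOut]
  rw [sum_insertNth p (fun u => ρ u u)]
  exact Finset.sum_comm

noncomputable def wAux {l n : ℕ} (p : Fin (n + 1)) (v : (Fin n → Fin l) → ℂ) (z : Fin l) :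
    (Fin (n + 1) → Fin l) → ℂ :=
  fun u => if u p = z then v (p.removeNth u) else 0

lemma wAux_insertNth {l n : ℕ} (p : Fin (n + 1)) (v : (Fin n → Fin l) → ℂ) (z a : Fin l)
    (x : Fin n → Fin l) : wAux p v z (p.insertNth a x) = if a = z then v x else 0 := by
  simp [wAux]

lemma posSemidef_traceOut {l n : ℕ} (p : Fin (n + 1)) {ρ : QMat l (n + 1)}
    (h : ρ.PosSemidef) : (traceOut p ρ).PosSemidef := by
  rw [posSemidef_iff_dotProduct_mulVec]
  constructor
  · show _ = _
    ext x y
    simp only [traceOut, conjTranspose_apply, star_sum]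
    refine Finset.sum_congr rfl fun z _ => ?_
    exact congrFun (congrFun h.1 _) _
  · intro v
    have hcol : ∀ (z : Fin l) (f : Fin l → (Fin n → Fin l) → ℂ),
        (∑ b : Fin l, ∑ y : Fin n → Fin l, if b = z then f b y else 0) = ∑ y, f z y := by
      intro z f
      rw [Finset.sum_comm]
      simp
    have step : ∀ z : Fin l, dotProduct (star (wAux p v z)) (ρ *ᵥ wAux p v z)
        = ∑ x, ∑ y, star (v x) *
            (ρ (p.insertNth z x) (p.insertNth z y) * v y) := by
      intro z
      calc dotProduct (star (wAux p v z)) (ρ *ᵥ wAux p v z)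
          = ∑ u, star (wAux p v z u) * ∑ u', ρ u u' * wAux p v z u' := by
            simp only [dotProduct, mulVec, Pi.star_apply]
        _ = ∑ a : Fin l, ∑ x : Fin n → Fin l, star (wAux p v z (p.insertNth a x)) *
              ∑ u', ρ (p.insertNth a x) u' * wAux p v z u' :=
            sum_insertNth p _
        _ = ∑ a : Fin l, ∑ x : Fin n → Fin l, star (wAux p v z (p.insertNth a x)) *
              ∑ b : Fin l, ∑ y : Fin n → Fin l,
                ρ (p.insertNth a x) (p.insertNth b y) * wAux p v z (p.insertNth b y) := by
            refine Finset.sum_congr rfl fun a _ => Finset.sum_congr rfl fun x _ => ?_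
            rw [sum_insertNth p (fun u => ρ (p.insertNth a x) u * wAux p v z u)]
        _ = ∑ x, star (v x) * ∑ y, ρ (p.insertNth z x) (p.insertNth z y) * v y := by
            simp only [wAux_insertNth, apply_ite star, star_zero, mul_ite, ite_mul, mul_zero,
              zero_mul, hcol]
        _ = ∑ x, ∑ y, star (v x) * (ρ (p.insertNth z x) (p.insertNth z y) * v y) := by
            simp only [Finset.mul_sum]
    have key : dotProduct (star v) ((traceOut p ρ) *ᵥ v)
        = ∑ z : Fin l, dotProduct (star (wAux p v z)) (ρ *ᵥ wAux p v z) := by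
      calc dotProduct (star v) ((traceOut p ρ) *ᵥ v)
          = ∑ x, ∑ y, ∑ z, star (v x) * (ρ (p.insertNth z x) (p.insertNth z y) * v y) := by
            simp only [dotProduct, mulVec, Pi.star_apply, traceOut, Finset.sum_mul,
              Finset.mul_sum]
        _ = ∑ x, ∑ z, ∑ y, star (v x) * (ρ (p.insertNth z x) (p.insertNth z y) * v y) :=
            Finset.sum_congr rfl fun x _ => Finset.sum_comm
        _ = ∑ z, ∑ x, ∑ y, star (v x) * (ρ (p.insertNth z x) (p.insertNth z y) * v y) :=
            Finset.sum_comm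
        _ = ∑ z : Fin l, dotProduct (star (wAux p v z)) (ρ *ᵥ wAux p v z) :=
            Finset.sum_congr rfl fun z _ => (step z).symm
    rw [key]
    exact Finset.sum_nonneg fun z _ => h.dotProduct_mulVec_nonneg (wAux p v z)

lemma range_comp_succAbove {n : ℕ} (q : Fin (n + 2)) (k : Fin (n + 1)) :
    Set.range (fun i : Fin n => q.succAbove (k.succAbove i))
      = ({q.succAbove k, q} : Set (Fin (n + 2)))ᶜ := by
  ext j
  simp only [Set.mem_range, Set.mem_compl_iff, Set.mem_insert_iff, Set.mem_singleton_iff,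
    not_or]
  constructor
  · rintro ⟨i, rfl⟩
    refine ⟨fun h => ?_, q.succAbove_ne _⟩
    exact k.succAbove_ne i (Fin.succAbove_right_injective h)
  · rintro ⟨h1, h2⟩
    obtain ⟨a, rfl⟩ := Fin.exists_succAbove_eq h2
    obtain ⟨i, rfl⟩ := Fin.exists_succAbove_eq
      (show a ≠ k from fun h => h1 (by rw [h]))
    exact ⟨i, rfl⟩

set_option linter.deprecated false in
lemma insertNth_comm {α : Type*} {n : ℕ} (p q : Fin (n + 2)) (hpq : p ≠ q) :
    ∃ p' q' : Fin (n + 1), ∀ (z w : α) (x : Fin n → α),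
      Fin.insertNth (α := fun _ => α) q w (Fin.insertNth p' z x)
        = Fin.insertNth (α := fun _ => α) p z (Fin.insertNth q' w x) := by
  obtain ⟨k, hk⟩ := Fin.exists_succAbove_eq hpq
  obtain ⟨m, hm⟩ := Fin.exists_succAbove_eq hpq.symm
  have hf : StrictMono (fun i : Fin n => q.succAbove (k.succAbove i)) :=
    (Fin.strictMono_succAbove q).comp (Fin.strictMono_succAbove k)
  have hg : StrictMono (fun i : Fin n => p.succAbove (m.succAbove i)) :=
    (Fin.strictMono_succAbove p).comp (Fin.strictMono_succAbove m)
  have hr : Set.range (fun i : Fin n => q.succAbove (k.succAbove i))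
      = Set.range (fun i : Fin n => p.succAbove (m.succAbove i)) := by
    rw [range_comp_succAbove, range_comp_succAbove, hk, hm, Set.pair_comm]
  have hcomp : ∀ i, q.succAbove (k.succAbove i) = p.succAbove (m.succAbove i) :=
    fun i => congrFun ((hf.range_inj hg).mp hr) i
  refine ⟨k, m, fun z w x => funext fun j => ?_⟩
  by_cases hjq : j = q
  · subst hjq
    rw [Fin.insertNth_apply_same, ← hm, Fin.insertNth_apply_succAbove,
      Fin.insertNth_apply_same]
  by_cases hjp : j = p
  · subst hjp
    rw [Fin.insertNth_apply_same, ← hk, Fin.insertNth_apply_succAbove,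
      Fin.insertNth_apply_same]
  · have hj : j ∈ Set.range (fun i : Fin n => q.succAbove (k.succAbove i)) := by
      rw [range_comp_succAbove, hk]
      simp [hjp, hjq]
    obtain ⟨i, hi⟩ := hj
    have hi' : q.succAbove (k.succAbove i) = j := hi
    rw [← hi', Fin.insertNth_apply_succAbove, Fin.insertNth_apply_succAbove, hcomp i,
      Fin.insertNth_apply_succAbove, Fin.insertNth_apply_succAbove]

lemma traceOut_comm {l n : ℕ} (p q : Fin (n + 2)) (hpq : p ≠ q) (ρ : QMat l (n + 2)) :
    ∃ p' q' : Fin (n + 1), traceOut p' (traceOut q ρ) = traceOut q' (traceOut p ρ) := by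
  obtain ⟨p', q', hc⟩ := insertNth_comm (α := Fin l) p q hpq
  refine ⟨p', q', ?_⟩
  funext x y
  simp only [traceOut]
  rw [Finset.sum_comm]
  simp only [hc]

/-! ### State-level lemmas -/

lemma del1_fst {l : ℕ} {ρ σ : QState l} (h : σ ∈ del1 ρ) : ρ.1 = σ.1 + 1 := by
  obtain ⟨m, mat⟩ := ρ
  cases m with
  | zero => exact absurd h (Set.notMem_empty σ)
  | succ m =>
    obtain ⟨p, rfl⟩ := h
    rfl

lemma del1_density {l : ℕ} {ρ σ : QState l} (h : IsDensityS ρ) (hσ : σ ∈ del1 ρ) :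
    IsDensityS σ := by
  obtain ⟨m, mat⟩ := ρ
  cases m with
  | zero => exact absurd hσ (Set.notMem_empty σ)
  | succ m =>
    obtain ⟨p, rfl⟩ := hσ
    exact ⟨posSemidef_traceOut p h.1, (trace_traceOut p mat).trans h.2⟩

lemma mem_insSet_of_del1_subset {l : ℕ} {ρ : QState l} {Z : Set (QState l)}
    (h : IsDensityS ρ) (h0 : 0 < ρ.1) (hsub : del1 ρ ⊆ Z) : ρ ∈ insSet Z := by
  obtain ⟨n, mat⟩ := ρ
  have h0' : 0 < n := h0
  obtain ⟨m, rfl⟩ : ∃ m, n = m + 1 := ⟨n - 1, by omega⟩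
  have hπ : (⟨m, traceOut 0 mat⟩ : QState l) ∈ del1 ⟨m + 1, mat⟩ := ⟨0, rfl⟩
  exact Set.mem_biUnion (hsub hπ) ⟨h, hπ⟩

lemma Iq_spec {l t : ℕ} {Y : Set (QState l)} (hY : ∀ ρ ∈ Y, IsDensityS ρ ∧ 0 < ρ.1) :
    ∀ ρ ∈ Iq t Y, IsDensityS ρ ∧ 0 < ρ.1 := by
  induction t with
  | zero => exact hY
  | succ t ih =>
    intro ρ hρ
    obtain ⟨σ, _, hd, hdel⟩ := Set.mem_iUnion₂.mp hρ
    exact ⟨hd, by have := del1_fst hdel; omega⟩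

lemma delSet_mono {l : ℕ} {X Y : Set (QState l)} (h : X ⊆ Y) : delSet X ⊆ delSet Y := by
  intro τ hτ
  obtain ⟨σ, hσ, hτσ⟩ := Set.mem_iUnion₂.mp hτ
  exact Set.mem_biUnion (h hσ) hτσ

lemma delSet_Iq {l t : ℕ} {Y : Set (QState l)} (hY : ∀ ρ ∈ Y, IsDensityS ρ ∧ 0 < ρ.1) :
    delSet (Iq t Y) ⊆ Iq t (delSet Y) := by
  induction t with
  | zero => exact subset_rfl
  | succ t ih =>
    intro τ hτ
    obtain ⟨σ, hσ, hτσ⟩ := Set.mem_iUnion₂.mp hτ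
    obtain ⟨ρ, hρ, hσd, hρdel⟩ := Set.mem_iUnion₂.mp hσ
    obtain ⟨hρd, hρpos⟩ := Iq_spec hY ρ hρ
    obtain ⟨ns, matσ⟩ := σ
    have hns : ns = ρ.1 + 1 := del1_fst hρdel
    obtain ⟨m, rfl⟩ : ∃ m, ns = m + 2 := ⟨ρ.1 - 1, by omega⟩
    obtain ⟨p, hp⟩ := hρdel
    obtain ⟨q, hq⟩ := hτσ
    show τ ∈ insSet (Iq t (delSet Y))
    by_cases hpq : p = q
    · have hτρ : τ = ρ := by rw [hq, hp, hpq]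
      rw [hτρ]
      exact mem_insSet_of_del1_subset hρd hρpos
        (fun π hπ => ih (Set.mem_biUnion hρ hπ))
    · obtain ⟨p', q', hmx⟩ := traceOut_comm p q hpq matσ
      set π : QState l := ⟨m, traceOut p' (traceOut q matσ)⟩ with hπdef
      have hπτ : π ∈ del1 τ := by rw [hq]; exact ⟨p', rfl⟩
      have hπρ : π ∈ del1 ρ := by
        rw [hp]
        exact ⟨q', by rw [hπdef, hmx]⟩
      have hπ2 : π ∈ Iq t (delSet Y) := ih (Set.mem_biUnion hρ hπρ)
      have hτd : IsDensityS τ := del1_density hσd (by rw [hq]; exact ⟨q, rfl⟩)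
      exact Set.mem_biUnion hπ2 ⟨hτd, hπτ⟩

lemma Dq_spec {l n s : ℕ} (hsn : s ≤ n) {X : Set (QState l)}
    (hX : ∀ ρ ∈ X, ρ.1 = n ∧ IsDensityS ρ) :
    ∀ ρ ∈ Dq s X, ρ.1 = n - s ∧ IsDensityS ρ := by
  induction s with
  | zero => simpa [Dq] using hX
  | succ s ih =>
    intro ρ hρ
    obtain ⟨σ, hσ, hρσ⟩ := Set.mem_iUnion₂.mp hρ
    obtain ⟨hfst, hd⟩ := ih (by omega) σ hσ
    have := del1_fst hρσ
    exact ⟨by omega, del1_density hd hρσ⟩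

/-- `t` insertions followed by `s` deletions is contained in `s` deletions
followed by `t` insertions: `D^s(I^t(X)) ⊆ I^t(D^s(X))`. -/
theorem dels_ins_subset_ins_dels {l n s t : ℕ} (hsn : s ≤ n) (X : Set (QState l))
    (hX : ∀ ρ ∈ X, ρ.1 = n ∧ IsDensityS ρ) :
    Dq s (Iq t X) ⊆ Iq t (Dq s X) := by
  have key : ∀ s : ℕ, s ≤ n → Dq (l := l) s (Iq t X) ⊆ Iq t (Dq s X) := by
    intro s
    induction s with
    | zero => exact fun _ => subset_rfl
    | succ s ih =>
      intro hsn1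
      have hsn' : s ≤ n := by omega
      have hhyp : ∀ ρ ∈ Dq (l := l) s X, IsDensityS ρ ∧ 0 < ρ.1 := by
        intro ρ hρ
        obtain ⟨hfst, hd⟩ := Dq_spec hsn' hX ρ hρ
        exact ⟨hd, by omega⟩
      calc Dq (s + 1) (Iq t X) = delSet (Dq s (Iq t X)) := rfl
        _ ⊆ delSet (Iq t (Dq s X)) := delSet_mono (ih hsn')
        _ ⊆ Iq t (delSet (Dq s X)) := delSet_Iq hhyp
        _ = Iq t (Dq (s + 1) X) := rfl
  exact key s hsn
end

section
/- A set X of density matrices on n qudits corrects t deletion errors (all pairwise t-deletion spheres of distinct elements are disjoint) if and only if its minimum quantum indel distance d_min(X) := min_{ρ₁ ≠ ρ₂ ∈ X} min{ s + u : D^s(ρ₁) ∩ D^u(ρ₂) ≠ ∅ } satisfies d_min(X) ≥ 2t + 1. -/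
open Matrix
open scoped ComplexOrder

lemma traceOut_trace {l n : ℕ} (p : Fin (n+1)) (ρ : QMat l (n+1)) :
    (traceOut p ρ).trace = ρ.trace := by
  have := Equiv.sum_comp (Fin.insertNthEquiv (fun _ : Fin (n+1) => Fin l) p)
    (fun f => ρ f f)
  simp only [Matrix.trace, Matrix.diag, traceOut]
  rw [← this, Fintype.sum_prod_type, Finset.sum_comm]
  simp [Fin.insertNthEquiv]

lemma del1_level {l : ℕ} {σ τ : QState l} (h : σ ∈ del1 τ) : σ.1 + 1 = τ.1 := by
  obtain ⟨m, M⟩ := τ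
  cases m with
  | zero => exact absurd h (by simp [del1])
  | succ m => obtain ⟨p, rfl⟩ := h; rfl

lemma del1_trace {l : ℕ} {σ τ : QState l} (h : σ ∈ del1 τ) : σ.2.trace = τ.2.trace := by
  obtain ⟨m, M⟩ := τ
  cases m with
  | zero => exact absurd h (by simp [del1])
  | succ m => obtain ⟨p, rfl⟩ := h; exact traceOut_trace p M

lemma Dq_level {l : ℕ} {ρ σ : QState l} {s : ℕ} (h : σ ∈ Dq s {ρ}) : σ.1 + s = ρ.1 := by
  induction s generalizing σ with
  | zero => simp [Dq] at h; subst h; rfl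
  | succ s ih =>
    obtain ⟨τ, hτ, hστ⟩ := by simpa [Dq, delSet] using h
    rw [← ih hτ, ← del1_level hστ]; ring

lemma Dq_trace {l : ℕ} {ρ σ : QState l} {s : ℕ} (h : σ ∈ Dq s {ρ}) :
    σ.2.trace = ρ.2.trace := by
  induction s generalizing σ with
  | zero => simp [Dq] at h; subst h; rfl
  | succ s ih =>
    obtain ⟨τ, hτ, hστ⟩ := by simpa [Dq, delSet] using h
    rw [del1_trace hστ, ih hτ]

lemma Dq_nonempty {l : ℕ} {ρ : QState l} {s : ℕ} (h : s ≤ ρ.1) : (Dq s {ρ}).Nonempty := by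
  induction s with
  | zero => exact ⟨ρ, by simp [Dq]⟩
  | succ s ih =>
    obtain ⟨σ, hσ⟩ := ih (le_trans (Nat.le_succ s) h)
    have hlev := Dq_level hσ
    obtain ⟨m, M⟩ := σ
    cases m with
    | zero =>
      exfalso
      simp at hlev
      omega
    | succ m =>
      refine ⟨⟨m, traceOut 0 M⟩, ?_⟩
      simp only [Dq, delSet, Set.mem_iUnion]
      exact Set.mem_biUnion (x := ⟨m+1, M⟩) hσ (show (⟨m, traceOut 0 M⟩ : QState l) ∈ del1 ⟨m+1, M⟩ from ⟨0, rfl⟩)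

lemma Dq_mono {l : ℕ} {X Y : Set (QState l)} (h : X ⊆ Y) (s : ℕ) : Dq s X ⊆ Dq s Y := by
  induction s with
  | zero => exact h
  | succ s ih =>
    intro σ hσ
    obtain ⟨τ, hτ, hστ⟩ := by simpa [Dq, delSet] using hσ
    exact Set.mem_biUnion (ih hτ) hστ

lemma Dq_add {l : ℕ} (a b : ℕ) (X : Set (QState l)) : Dq a (Dq b X) = Dq (a + b) X := by
  induction a with
  | zero => rw [Nat.zero_add]; rfl
  | succ a ih =>
    rw [show a + 1 + b = a + b + 1 from by omega]
    show delSet _ = delSet _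
    rw [ih]

/-- A set `X` of density matrices on `n` qudits corrects `t` deletion errors
iff its minimum quantum indel distance is at least `2t + 1`, i.e., all pairwise
indel distances of distinct elements are at least `2t + 1`. -/
theorem corrects_del_iff_qdist_ge {l n t : ℕ} (htn : t ≤ n)
    (X : Set (QState l)) (hX : ∀ ρ ∈ X, ρ.1 = n ∧ IsDensityS ρ) :
    (∀ ρ₁ ∈ X, ∀ ρ₂ ∈ X, ρ₁ ≠ ρ₂ → Dq t {ρ₁} ∩ Dq t {ρ₂} = ∅) ↔
    (∀ ρ₁ ∈ X, ∀ ρ₂ ∈ X, ρ₁ ≠ ρ₂ → 2 * t + 1 ≤ qdist ρ₁ ρ₂) := by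
  constructor
  · intro H ρ₁ h₁ ρ₂ h₂ hne
    obtain ⟨hn₁, hd₁⟩ := hX ρ₁ h₁
    obtain ⟨hn₂, hd₂⟩ := hX ρ₂ h₂
    -- Every element of the distance set is ≥ 2t+1, and the set is nonempty.
    have hSne : ∃ k, k ∈ { k | ∃ s u : ℕ, s + u = k ∧ (Dq s {ρ₁} ∩ Dq u {ρ₂}).Nonempty } := by
      obtain ⟨σ, hσ⟩ := Dq_nonempty (ρ := ρ₁) (s := n) (by omega)
      obtain ⟨τ, hτ⟩ := Dq_nonempty (ρ := ρ₂) (s := n) (by omega)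
      have hσl : σ.1 = 0 := by have := Dq_level hσ; omega
      have hτl : τ.1 = 0 := by have := Dq_level hτ; omega
      have hστ : σ = τ := by
        obtain ⟨m, M⟩ := σ; obtain ⟨m', M'⟩ := τ
        simp only at hσl hτl; subst hσl; subst hτl
        have hM : M.trace = 1 := by rw [show M = (⟨0, M⟩ : QState l).2 from rfl, Dq_trace hσ, hd₁.2]
        have hM' : M'.trace = 1 := by rw [show M' = (⟨0, M'⟩ : QState l).2 from rfl, Dq_trace hτ, hd₂.2]
        congr 1
        funext x y
        have hx : x = y := Subsingleton.elim x y
        subst hx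
        have e1 : M x x = M.trace := (Fintype.sum_subsingleton (fun y => M y y) x).symm
        have e2 : M' x x = M'.trace := (Fintype.sum_subsingleton (fun y => M' y y) x).symm
        rw [e1, e2, hM, hM']
      exact ⟨n + n, n, n, rfl, σ, hσ, hστ ▸ hτ⟩
    have hlb : ∀ k ∈ { k | ∃ s u : ℕ, s + u = k ∧ (Dq s {ρ₁} ∩ Dq u {ρ₂}).Nonempty },
        2 * t + 1 ≤ k := by
      rintro k ⟨s, u, rfl, σ, hσ₁, hσ₂⟩
      by_contra hk
      push_neg at hk
      have l1 := Dq_level hσ₁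
      have l2 := Dq_level hσ₂
      rw [hn₁] at l1; rw [hn₂] at l2
      have hsu : s = u := by omega
      subst hsu
      have hst : s ≤ t := by omega
      -- delete t - s more
      obtain ⟨τ, hτ⟩ := Dq_nonempty (ρ := σ) (s := t - s) (by omega)
      have h1 : τ ∈ Dq t {ρ₁} := by
        have := Dq_mono (Set.singleton_subset_iff.2 hσ₁) (t - s) hτ
        rw [Dq_add] at this
        rwa [show t - s + s = t by omega] at this
      have h2 : τ ∈ Dq t {ρ₂} := by
        have := Dq_mono (Set.singleton_subset_iff.2 hσ₂) (t - s) hτ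
        rw [Dq_add] at this
        rwa [show t - s + s = t by omega] at this
      have := H ρ₁ h₁ ρ₂ h₂ hne
      rw [Set.eq_empty_iff_forall_notMem] at this
      exact this τ ⟨h1, h2⟩
    exact le_csInf hSne hlb
  · intro H ρ₁ h₁ ρ₂ h₂ hne
    by_contra hcon
    rw [Set.eq_empty_iff_forall_notMem] at hcon
    push_neg at hcon
    obtain ⟨σ, hσ⟩ := hcon
    have : qdist ρ₁ ρ₂ ≤ 2 * t := Nat.sInf_le ⟨t, t, by omega, σ, hσ⟩
    have := H ρ₁ h₁ ρ₂ h₂ hne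
    omega
end
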